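/- Let P and E be orthogonal projections on a complex Hilbert space, and set T = 1 - 2PEP and T' = 1 - 2EPE. Then the map v ↦ Ev restricts to a linear bijection from ker T onto ker T' (with inverse given on ker T' by w ↦ 2Pw). In particular, if both kernels are finite-dimensional, dim ker T = dim ker T'. -/

import Mathlib

/-- For projections P, E and T = 1 - 2PEP, T' = 1 - 2EPE, the map v ↦ Ev is a bijection
from ker T onto ker T', with inverse w ↦ 2Pw; in particular the kernels have equal
(finite) dimensions. -/
theorem stmt_6 {H : Type*} [NormedAddCommGroup H] [InnerProductSpace ℂ H] [CompleteSpace H]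
    (P E : H →L[ℂ] H)
    (hP : ContinuousLinearMap.adjoint P = P) (hP2 : P * P = P)
    (hE : ContinuousLinearMap.adjoint E = E) (hE2 : E * E = E) :
    Set.BijOn E (LinearMap.ker ((1 - 2 * (P * E * P) : H →L[ℂ] H) : H →ₗ[ℂ] H) : Set H)
      (LinearMap.ker ((1 - 2 * (E * P * E) : H →L[ℂ] H) : H →ₗ[ℂ] H) : Set H) ∧
    (∀ w ∈ LinearMap.ker ((1 - 2 * (E * P * E) : H →L[ℂ] H) : H →ₗ[ℂ] H),
      (2 : ℂ) • P w ∈ LinearMap.ker ((1 - 2 * (P * E * P) : H →L[ℂ] H) : H →ₗ[ℂ] H) ∧ E ((2 : ℂ) • P w) = w) ∧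
    (FiniteDimensional ℂ (LinearMap.ker ((1 - 2 * (P * E * P) : H →L[ℂ] H) : H →ₗ[ℂ] H)) →
      FiniteDimensional ℂ (LinearMap.ker ((1 - 2 * (E * P * E) : H →L[ℂ] H) : H →ₗ[ℂ] H)) →
      Module.finrank ℂ (LinearMap.ker ((1 - 2 * (P * E * P) : H →L[ℂ] H) : H →ₗ[ℂ] H)) =
        Module.finrank ℂ (LinearMap.ker ((1 - 2 * (E * P * E) : H →L[ℂ] H) : H →ₗ[ℂ] H))) := by
  have hPP : ∀ x, P (P x) = P x := fun x => by
    have := congrArg (fun f : H →L[ℂ] H => f x) hP2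
    simpa [ContinuousLinearMap.mul_apply] using this
  have hEE : ∀ x, E (E x) = E x := fun x => by
    have := congrArg (fun f : H →L[ℂ] H => f x) hE2
    simpa [ContinuousLinearMap.mul_apply] using this
  have memT : ∀ v : H, v ∈ LinearMap.ker ((1 - 2 * (P * E * P) : H →L[ℂ] H) : H →ₗ[ℂ] H) ↔ v = 2 • P (E (P v)) := by
    intro v
    rw [LinearMap.mem_ker]
    simp [ContinuousLinearMap.sub_apply, ContinuousLinearMap.mul_apply, two_smul, two_mul,
      sub_eq_zero]
  have memT' : ∀ w : H, w ∈ LinearMap.ker ((1 - 2 * (E * P * E) : H →L[ℂ] H) : H →ₗ[ℂ] H) ↔ w = 2 • E (P (E w)) := by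
    intro w
    rw [LinearMap.mem_ker]
    simp [ContinuousLinearMap.sub_apply, ContinuousLinearMap.mul_apply, two_smul, two_mul,
      sub_eq_zero]
  -- For v in ker T, P v = v
  have hPfix : ∀ v, v ∈ LinearMap.ker ((1 - 2 * (P * E * P) : H →L[ℂ] H) : H →ₗ[ℂ] H) → P v = v := by
    intro v hv
    rw [memT] at hv
    calc P v = P (2 • P (E (P v))) := by rw [← hv]
    _ = 2 • P (P (E (P v))) := by rw [map_nsmul]
    _ = 2 • P (E (P v)) := by rw [hPP]
    _ = v := hv.symm
  have hEfix : ∀ w, w ∈ LinearMap.ker ((1 - 2 * (E * P * E) : H →L[ℂ] H) : H →ₗ[ℂ] H) → E w = w := by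
    intro w hw
    rw [memT'] at hw
    calc E w = E (2 • E (P (E w))) := by rw [← hw]
    _ = 2 • E (E (P (E w))) := by rw [map_nsmul]
    _ = 2 • E (P (E w)) := by rw [hEE]
    _ = w := hw.symm
  -- E maps ker T to ker T'
  have hmapsTo : ∀ v, v ∈ LinearMap.ker ((1 - 2 * (P * E * P) : H →L[ℂ] H) : H →ₗ[ℂ] H) →
      E v ∈ LinearMap.ker ((1 - 2 * (E * P * E) : H →L[ℂ] H) : H →ₗ[ℂ] H) := by
    intro v hv
    have hPv := hPfix v hv
    rw [memT] at hv
    rw [memT']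
    calc E v = E (2 • P (E (P v))) := by rw [← hv]
    _ = 2 • E (P (E (P v))) := by rw [map_nsmul]
    _ = 2 • E (P (E (E (P v)))) := by rw [hEE]
    _ = 2 • E (P (E (E v))) := by rw [hPv]
  -- v is recovered from E v
  have hrec : ∀ v, v ∈ LinearMap.ker ((1 - 2 * (P * E * P) : H →L[ℂ] H) : H →ₗ[ℂ] H) → v = 2 • P (E v) := by
    intro v hv
    have hPv := hPfix v hv
    rw [memT] at hv
    rw [hPv] at hv
    exact hv
  -- inverse: w ∈ ker T' gives (2:ℂ) • P w ∈ ker T with E of it = w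
  have hinv : ∀ w, w ∈ LinearMap.ker ((1 - 2 * (E * P * E) : H →L[ℂ] H) : H →ₗ[ℂ] H) →
      (2 : ℂ) • P w ∈ LinearMap.ker ((1 - 2 * (P * E * P) : H →L[ℂ] H) : H →ₗ[ℂ] H) ∧ E ((2 : ℂ) • P w) = w := by
    intro w hw
    have hEw := hEfix w hw
    rw [memT'] at hw
    have hEPw : E ((2 : ℂ) • P w) = w := by
      rw [map_smul]
      have : E (P w) = E (P (E w)) := by rw [hEw]
      rw [this]
      have h2 : (2 : ℂ) • E (P (E w)) = 2 • E (P (E w)) := by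
        rw [two_smul, two_smul]
      rw [h2, ← hw]
    constructor
    · rw [memT]
      have hPv : P ((2 : ℂ) • P w) = (2 : ℂ) • P w := by rw [map_smul, hPP]
      rw [hPv, hEPw, two_smul, two_smul]
    · exact hEPw
  have hbij : Set.BijOn E (LinearMap.ker ((1 - 2 * (P * E * P) : H →L[ℂ] H) : H →ₗ[ℂ] H) : Set H)
      (LinearMap.ker ((1 - 2 * (E * P * E) : H →L[ℂ] H) : H →ₗ[ℂ] H) : Set H) := by
    refine ⟨fun v hv => hmapsTo v hv, ?_, ?_⟩
    · intro v hv v' hv' hEvv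
      rw [hrec v hv, hrec v' hv', hEvv]
    · intro w hw
      obtain ⟨h1, h2⟩ := hinv w hw
      exact ⟨(2 : ℂ) • P w, h1, h2⟩
  refine ⟨hbij, hinv, fun _ _ => ?_⟩
  -- linear equivalence between the kernels
  let f : (LinearMap.ker ((1 - 2 * (P * E * P) : H →L[ℂ] H) : H →ₗ[ℂ] H)) →ₗ[ℂ]
      (LinearMap.ker ((1 - 2 * (E * P * E) : H →L[ℂ] H) : H →ₗ[ℂ] H)) :=
    (E : H →ₗ[ℂ] H).restrict (fun v hv => hmapsTo v hv)
  have hfbij : Function.Bijective f := by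
    constructor
    · intro v v' h
      have : E (v : H) = E (v' : H) := congrArg Subtype.val h
      exact Subtype.ext (hbij.injOn v.2 v'.2 this)
    · intro w
      obtain ⟨v, hv, hEv⟩ := hbij.surjOn w.2
      exact ⟨⟨v, hv⟩, Subtype.ext hEv⟩
  exact LinearEquiv.finrank_eq (LinearEquiv.ofBijective f hfbij)
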